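/- Let M be a simple binary k-paving matroid of rank r with r ≥ k + 4 whose ground set is not a circuit of M, and suppose every circuit of M has size at least r - w + 1 for a non-negative integer w ≤ k with equality achieved by some circuit. Then |E(M)| ≤ (r + 1) + ∑_{i=0}^{s} C(w, i), where s = ⌊(3w + 1 - r)/2⌋. -/

import Mathlib

namespace Matroid

variable {α : Type*}

/-- A circuit of a matroid is a minimal dependent set. -/
def Circuit (M : Matroid α) (C : Set α) : Prop :=
  M.Dep C ∧ ∀ D, D ⊂ C → M.Indep D

/-- A coloop is an element belonging to every basis. -/
def Coloop (M : Matroid α) (e : α) : Prop :=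
  e ∈ M.E ∧ ∀ B, M.IsBase B → e ∈ B

/-- A matroid is simple if every subset of the ground set with at most two
elements is independent. -/
def Simple (M : Matroid α) : Prop :=
  ∀ e ∈ M.E, ∀ f ∈ M.E, M.Indep {e, f}

/-- The rank of a matroid: the supremum of the cardinalities of its bases. -/
noncomputable def rk (M : Matroid α) : ℕ :=
  sSup {n | ∃ B, M.IsBase B ∧ B.ncard = n}

/-- A matroid is representable over a field `F` if independence in `M` coincides
with linear independence under some assignment of vectors to ground set elements. -/
def RepresentableOver (M : Matroid α) (F : Type) [Field F] : Prop :=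
  ∃ (n : ℕ) (φ : α → (Fin n → F)),
    ∀ I, I ⊆ M.E → (M.Indep I ↔ LinearIndependent F (fun x : I => φ x))

/-- An element `e` is `k`-loose if every circuit containing `e` has size
greater than `r - k`, where `r` is the rank of the matroid. -/
def KLoose (M : Matroid α) (k : ℕ) (e : α) : Prop :=
  e ∈ M.E ∧ ∀ C, M.Circuit C → e ∈ C → M.rk - k < C.ncard

/-- A matroid is `k`-paving if every element is `k`-loose. -/
def KPaving (M : Matroid α) (k : ℕ) : Prop :=
  ∀ e ∈ M.E, M.KLoose k e

end Matroid

open scoped symmDiff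

private lemma aux_two (a : ZMod 2) (ha : a ≠ 0) : a = 1 := by revert ha; revert a; decide

private lemma aux_not_li {α : Type*} {n : ℕ} (φ : α → (Fin n → ZMod 2)) (A : Finset α)
    (h : ¬ LinearIndependent (ZMod 2) (fun x : (↑A : Set α) => φ x)) :
    ∃ S : Finset α, S ⊆ A ∧ S.Nonempty ∧ ∑ e ∈ S, φ e = 0 := by
  classical
  rw [Fintype.not_linearIndependent_iff] at h
  obtain ⟨g, hsum, x0, hx0⟩ := h
  refine ⟨(Finset.univ.filter (fun x : (↑A : Set α) => g x ≠ 0)).image Subtype.val, ?_, ?_, ?_⟩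
  · intro a ha
    simp only [Finset.mem_image, Finset.mem_filter] at ha
    obtain ⟨x, _, rfl⟩ := ha
    exact Finset.mem_coe.mp x.2
  · exact ⟨x0, Finset.mem_image.mpr ⟨x0, Finset.mem_filter.mpr ⟨Finset.mem_univ _, hx0⟩, rfl⟩⟩
  · rw [Finset.sum_image (by intro x _ y _ hxy; exact Subtype.ext hxy)]
    rw [← hsum]
    calc ∑ x ∈ Finset.univ.filter (fun x : (↑A : Set α) => g x ≠ 0), φ (x : α)
        = ∑ x ∈ Finset.univ.filter (fun x : (↑A : Set α) => g x ≠ 0), g x • φ (x : α) :=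
          Finset.sum_congr rfl (fun x hx => by
            rw [aux_two (g x) (Finset.mem_filter.mp hx).2, one_smul])
      _ = ∑ x, g x • φ (x : α) :=
          Finset.sum_filter_of_ne (fun x _ h0 hg0 => h0 (by rw [hg0, zero_smul]))

private lemma aux_li_sum {α : Type*} {n : ℕ} (φ : α → (Fin n → ZMod 2)) (A S : Finset α)
    (hli : LinearIndependent (ZMod 2) (fun x : (↑A : Set α) => φ x))
    (hS : S ⊆ A) (hsum : ∑ e ∈ S, φ e = 0) : S = ∅ := by
  classical
  rw [Fintype.linearIndependent_iff] at hli
  have key := hli (fun x => if (x : α) ∈ S then 1 else 0) ?_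
  · rw [Finset.eq_empty_iff_forall_notMem]
    intro e he
    have := key ⟨e, Finset.mem_coe.mpr (hS he)⟩
    simp [he] at this
  · have h0 : (∑ x : (↑A : Set α), (if (x : α) ∈ S then (1 : ZMod 2) else 0) • φ x)
        = ∑ e ∈ A, (if e ∈ S then (1 : ZMod 2) else 0) • φ e :=
      Finset.sum_finset_coe (fun e => (if e ∈ S then (1 : ZMod 2) else 0) • φ e) A
    rw [h0]
    simp only [ite_smul, one_smul, zero_smul]
    rw [Finset.sum_ite_mem, Finset.inter_eq_right.mpr hS, hsum]

private lemma aux_circuit {α : Type*} (M : Matroid α) :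
    ∀ (n : ℕ) (X : Set α), X.Finite → X.ncard ≤ n → M.Dep X → ∃ C, C ⊆ X ∧ M.Circuit C := by
  intro n
  induction n with
  | zero =>
      intro X hfin hcard hdep
      rw [Nat.le_zero, Set.ncard_eq_zero hfin] at hcard
      subst hcard
      exact absurd M.empty_indep hdep.not_indep
  | succ n ih =>
      intro X hfin hcard hdep
      by_cases h : ∀ D, D ⊂ X → M.Indep D
      · exact ⟨X, subset_rfl, hdep, h⟩
      · push_neg at h
        obtain ⟨D, hDX, hD⟩ := h
        have hdepD : M.Dep D := ⟨hD, hDX.subset.trans hdep.subset_ground⟩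
        obtain ⟨C, hCD, hC⟩ := ih D (hfin.subset hDX.subset)
          (by have := Set.ncard_lt_ncard hDX hfin; omega) hdepD
        exact ⟨C, hCD.trans hDX.subset, hC⟩


/-- Let `M` be a simple binary `k`-paving matroid of rank `r ≥ k + 4` that is not a
circuit, and suppose every circuit of `M` has size at least `r - w + 1` for some
`w ≤ k`, with equality achieved by some circuit. Then
`|E(M)| ≤ (r+1) + ∑_{i=0}^{s} C(w,i)`, where `s = ⌊(3w + 1 - r)/2⌋`. -/
theorem size_bound_smallest_circuit {α : Type*} (k r w : ℕ) (M : Matroid α) [M.Finite]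
    (hsimple : M.Simple) (hbinary : M.RepresentableOver (ZMod 2))
    (hpaving : M.KPaving k) (hrank : M.rk = r) (hr : k + 4 ≤ r)
    (hnotcirc : ¬ M.Circuit M.E) (hw : w ≤ k)
    (hlower : ∀ C, M.Circuit C → r - w + 1 ≤ C.ncard)
    (hexists : ∃ C, M.Circuit C ∧ C.ncard = r - w + 1)
    (s : ℤ) (hs : s = Int.fdiv (3 * w + 1 - r) 2) :
    (M.E.ncard : ℤ) ≤ (r + 1) + ∑ i ∈ Finset.Icc (0 : ℤ) s, (w.choose i.toNat : ℤ) := by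
  classical
  rw [Int.fdiv_eq_ediv_of_nonneg _ (by norm_num)] at hs
  obtain ⟨n, φ, hrep⟩ := hbinary
  have hEfin : M.E.Finite := M.ground_finite
  have hwr : w + 4 ≤ r := le_trans (by omega) hr
  -- char-2 helpers
  have h5 : ∀ v : Fin n → ZMod 2, v + v = 0 := by
    intro v; funext i
    have : ∀ a : ZMod 2, a + a = 0 := by decide
    exact this (v i)
  have hchar : ∀ x y : Fin n → ZMod 2, x + y = 0 → x = y := by
    intro x y h; funext i
    have hxy : x i + y i = 0 := congrFun h i
    revert hxy; generalize x i = a; generalize y i = b; revert b; revert a; decide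
  have hsymmsum : ∀ st tt : Finset α, ∑ e ∈ st ∆ tt, φ e = ∑ e ∈ st, φ e + ∑ e ∈ tt, φ e := by
    intro st tt
    have h1 : ∑ e ∈ st ∪ tt, φ e + ∑ e ∈ st ∩ tt, φ e = ∑ e ∈ st, φ e + ∑ e ∈ tt, φ e :=
      Finset.sum_union_inter
    have h2 : st ∆ tt ∪ (st ∩ tt) = st ∪ tt := symmDiff_sup_inf st tt
    have h3 : Disjoint (st ∆ tt) (st ∩ tt) := disjoint_symmDiff_inf st tt
    have h4 : ∑ e ∈ st ∆ tt, φ e + ∑ e ∈ st ∩ tt, φ e = ∑ e ∈ st ∪ tt, φ e := by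
      rw [← Finset.sum_union h3, h2]
    calc ∑ e ∈ st ∆ tt, φ e
        = ∑ e ∈ st ∆ tt, φ e + (∑ e ∈ st ∩ tt, φ e + ∑ e ∈ st ∩ tt, φ e) := by
          rw [h5, add_zero]
      _ = (∑ e ∈ st ∆ tt, φ e + ∑ e ∈ st ∩ tt, φ e) + ∑ e ∈ st ∩ tt, φ e := by abel
      _ = ∑ e ∈ st ∪ tt, φ e + ∑ e ∈ st ∩ tt, φ e := by rw [h4]
      _ = ∑ e ∈ st, φ e + ∑ e ∈ tt, φ e := h1
  have hcardsymm : ∀ st tt : Finset α,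
      (st ∆ tt).card + (st ∩ tt).card + (st ∩ tt).card = st.card + tt.card := by
    intro st tt
    have hd : Disjoint (st ∆ tt) (st ∩ tt) := disjoint_symmDiff_inf st tt
    have hu : (st ∆ tt) ∪ (st ∩ tt) = st ∪ tt := symmDiff_sup_inf st tt
    have h1 := Finset.card_union_of_disjoint hd
    rw [hu] at h1
    have h2 := Finset.card_union_add_card_inter st tt
    omega
  -- the circuit C0
  obtain ⟨C0s, hC0circ, hC0card⟩ := hexists
  have hC0E : C0s ⊆ M.E := hC0circ.1.subset_ground
  have hC0fin : C0s.Finite := hEfin.subset hC0E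
  set C0 : Finset α := hC0fin.toFinset with hC0def
  have hC0coe : (↑C0 : Set α) = C0s := hC0fin.coe_toFinset
  have hC0circ' : M.Circuit (↑C0 : Set α) := by rw [hC0coe]; exact hC0circ
  have hC0E' : (↑C0 : Set α) ⊆ M.E := by rw [hC0coe]; exact hC0E
  have hC0cardd : C0.card = r - w + 1 := by
    have h := Set.ncard_coe_finset C0
    rw [hC0coe, hC0card] at h
    omega
  -- key lemmas
  have key1 : ∀ A : Finset α, (↑A : Set α) ⊆ M.E → A.Nonempty → (∑ e ∈ A, φ e = 0) →
      ¬ M.Indep (↑A : Set α) := by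
    intro A hAE hAne hsum hind
    exact hAne.ne_empty (aux_li_sum φ A A ((hrep _ hAE).mp hind) subset_rfl hsum)
  have key2 : ∀ A : Finset α, (↑A : Set α) ⊆ M.E → A.Nonempty → (∑ e ∈ A, φ e = 0) →
      r - w + 1 ≤ A.card := by
    intro A hAE hAne hsum
    have hdep : M.Dep (↑A : Set α) := ⟨key1 A hAE hAne hsum, hAE⟩
    obtain ⟨C, hCA, hC⟩ := aux_circuit M (↑A : Set α).ncard _ A.finite_toSet le_rfl hdep
    have h1 := hlower C hC
    have h2 : C.ncard ≤ A.card := by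
      have := Set.ncard_le_ncard hCA A.finite_toSet
      rwa [Set.ncard_coe_finset] at this
    omega
  -- the sum over C0 vanishes
  have hC0sum : ∑ e ∈ C0, φ e = 0 := by
    have hnli : ¬ LinearIndependent (ZMod 2) (fun x : (↑C0 : Set α) => φ x) :=
      fun h => hC0circ'.1.1 ((hrep _ hC0E').mpr h)
    obtain ⟨S, hSsub, hSne, hSsum⟩ := aux_not_li φ C0 hnli
    have hSC0 : S = C0 := by
      by_contra hne
      have hss : (↑S : Set α) ⊂ (↑C0 : Set α) :=
        Finset.coe_ssubset.mpr (Finset.ssubset_iff_subset_ne.mpr ⟨hSsub, hne⟩)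
      exact key1 S ((Finset.coe_subset.mpr hSsub).trans hC0E') hSne hSsum (hC0circ'.2 _ hss)
    rw [← hSC0]; exact hSsum
  -- f0 and the base B
  have hC0ne : C0.Nonempty := Finset.card_pos.mp (by omega)
  obtain ⟨f0, hf0⟩ := hC0ne
  have herase_ss : (↑(C0.erase f0) : Set α) ⊂ (↑C0 : Set α) :=
    Finset.coe_ssubset.mpr (Finset.erase_ssubset hf0)
  have herase : M.Indep (↑(C0.erase f0) : Set α) := hC0circ'.2 _ herase_ss
  obtain ⟨Bs, hBbaseS, hBsupS⟩ := herase.exists_isBase_superset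
  have hBfinS : Bs.Finite := hEfin.subset hBbaseS.subset_ground
  set B : Finset α := hBfinS.toFinset with hBdef
  have hBcoe : (↑B : Set α) = Bs := hBfinS.coe_toFinset
  have hBbase : M.IsBase (↑B : Set α) := by rw [hBcoe]; exact hBbaseS
  have hBsup : C0.erase f0 ⊆ B := by
    rw [← Finset.coe_subset, hBcoe]; exact hBsupS
  have hBindep : M.Indep (↑B : Set α) := hBbase.indep
  have hBE : (↑B : Set α) ⊆ M.E := hBindep.subset_ground
  have hBcard : B.card = r := by
    have hset : {m | ∃ B', M.IsBase B' ∧ B'.ncard = m} = {(↑B : Set α).ncard} := by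
      ext m
      simp only [Set.mem_setOf_eq, Set.mem_singleton_iff]
      constructor
      · rintro ⟨B', hB', rfl⟩; exact hB'.ncard_eq_ncard_of_isBase hBbase
      · rintro rfl; exact ⟨_, hBbase, rfl⟩
    have hrk : M.rk = (↑B : Set α).ncard := by
      show sSup {m | ∃ B', M.IsBase B' ∧ B'.ncard = m} = (↑B : Set α).ncard
      rw [hset, csSup_singleton]
    rw [hrank] at hrk
    rw [← Set.ncard_coe_finset B, ← hrk]
  have hf0E : f0 ∈ M.E := hC0E' (Finset.mem_coe.mpr hf0)
  have hf0B : f0 ∉ B := by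
    intro hin
    have hC0B : C0 ⊆ B := by
      intro x hx
      by_cases hxf : x = f0
      · rwa [hxf]
      · exact hBsup (Finset.mem_erase.mpr ⟨hxf, hx⟩)
    exact hC0circ'.1.1 (hBindep.subset (Finset.coe_subset.mpr hC0B))
  -- W
  set W : Finset α := B \ C0 with hWdef
  have hBC0 : B ∩ C0 = C0.erase f0 := by
    apply Finset.Subset.antisymm
    · intro x hx
      rw [Finset.mem_inter] at hx
      exact Finset.mem_erase.mpr ⟨fun h => hf0B (h ▸ hx.1), hx.2⟩
    · intro x hx
      exact Finset.mem_inter.mpr ⟨hBsup hx, Finset.mem_of_mem_erase hx⟩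
  have herasecard : (C0.erase f0).card = r - w := by
    rw [Finset.card_erase_of_mem hf0, hC0cardd]; omega
  have hWcard : W.card = w := by
    have h1 := Finset.card_inter_add_card_sdiff B C0
    rw [← hWdef] at h1
    rw [hBC0, herasecard, hBcard] at h1
    omega
  -- ground finset and X
  set EF : Finset α := hEfin.toFinset with hEFdef
  have hEFcoe : (↑EF : Set α) = M.E := hEfin.coe_toFinset
  have hBEF : B ⊆ EF := by rw [← Finset.coe_subset, hEFcoe]; exact hBE
  set X : Finset α := EF \ B with hXdef
  have hXmem : ∀ e, e ∈ X → e ∈ M.E ∧ e ∉ B := by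
    intro e he
    rw [hXdef, Finset.mem_sdiff] at he
    exact ⟨by rw [← hEFcoe]; exact Finset.mem_coe.mpr he.1, he.2⟩
  have hf0X : f0 ∈ X := by
    rw [hXdef, Finset.mem_sdiff]
    exact ⟨by rw [← Finset.mem_coe, hEFcoe]; exact hf0E, hf0B⟩
  -- fundamental representation F
  have hFex : ∀ e : α, ∃ F : Finset α, e ∈ X → (F ⊆ B ∧ φ e = ∑ b ∈ F, φ b) := by
    intro e
    by_cases he : e ∈ X
    · have hdep : M.Dep (insert e (↑B : Set α)) :=
        hBbase.insert_dep ⟨(hXmem e he).1, fun h => (hXmem e he).2 (Finset.mem_coe.mp h)⟩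
      have hcoeins : (↑(insert e B) : Set α) = insert e (↑B : Set α) := Finset.coe_insert e B
      have hnli : ¬ LinearIndependent (ZMod 2) (fun x : (↑(insert e B) : Set α) => φ x) := by
        intro h
        apply hdep.not_indep
        rw [← hcoeins]
        exact (hrep _ (by rw [hcoeins]; exact Set.insert_subset (hXmem e he).1 hBE)).mpr h
      obtain ⟨S, hSsub, hSne, hSsum⟩ := aux_not_li φ _ hnli
      by_cases heS : e ∈ S
      · refine ⟨S.erase e, fun _ => ⟨?_, ?_⟩⟩
        · intro x hx
          have hxS := Finset.mem_of_mem_erase hx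
          rcases Finset.mem_insert.mp (hSsub hxS) with h | h
          · exact absurd h (Finset.ne_of_mem_erase hx)
          · exact h
        · have hsplit := Finset.add_sum_erase S φ heS
          rw [hSsum] at hsplit
          exact hchar _ _ hsplit
      · exfalso
        have hSB : S ⊆ B := by
          intro x hx
          rcases Finset.mem_insert.mp (hSsub hx) with h | h
          · exact absurd (h ▸ hx) heS
          · exact h
        exact hSne.ne_empty (aux_li_sum φ B S ((hrep _ hBE).mp hBindep) hSB hSsum)
    · exact ⟨∅, fun h => absurd h he⟩
  choose F0 hF0 using hFex
  set Fn : α → Finset α := fun e => if e = f0 then C0.erase f0 else F0 e with hFndef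
  have hFsub : ∀ e ∈ X, Fn e ⊆ B := by
    intro e he
    by_cases h : e = f0
    · simp only [hFndef, if_pos h]; exact hBsup
    · simp only [hFndef, if_neg h]; exact (hF0 e he).1
  have hFeq : ∀ e ∈ X, φ e = ∑ b ∈ Fn e, φ b := by
    intro e he
    by_cases h : e = f0
    · subst h
      simp only [hFndef, if_pos rfl]
      have hsplit := Finset.add_sum_erase C0 φ hf0
      rw [hC0sum] at hsplit
      exact hchar _ _ hsplit
    · simp only [hFndef, if_neg h]; exact (hF0 e he).2
  set σ : α → Finset α := fun e => Fn e ∩ W with hσdef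
  have hσW : ∀ e, σ e ⊆ W := fun e => Finset.inter_subset_right
  have hσf0 : σ f0 = ∅ := by
    simp only [hσdef, hFndef, if_pos rfl]
    rw [Finset.eq_empty_iff_forall_notMem]
    intro x hx
    rw [Finset.mem_inter, hWdef, Finset.mem_sdiff] at hx
    exact hx.2.2 (Finset.mem_of_mem_erase hx.1)
  -- size facts for each e in X
  have hkeyA : ∀ e ∈ X, r - w + 1 ≤ 1 + (Fn e).card ∧
      (e ≠ f0 → (Fn e).card ≤ 1 + 2 * (σ e).card) := by
    intro e he
    have heB : e ∉ B := (hXmem e he).2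
    have heF : e ∉ Fn e := fun h => heB (hFsub e he h)
    set A : Finset α := insert e (Fn e) with hAdef
    have hAcard : A.card = 1 + (Fn e).card := by
      rw [hAdef, Finset.card_insert_of_notMem heF]; omega
    have hAsum : ∑ x ∈ A, φ x = 0 := by
      rw [hAdef, Finset.sum_insert heF, ← hFeq e he]
      exact h5 (φ e)
    have hAE : (↑A : Set α) ⊆ M.E := by
      rw [hAdef, Finset.coe_insert]
      exact Set.insert_subset (hXmem e he).1 ((Finset.coe_subset.mpr (hFsub e he)).trans hBE)
    have h1 : r - w + 1 ≤ A.card :=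
      key2 A hAE ⟨e, Finset.mem_insert_self e _⟩ hAsum
    refine ⟨by omega, fun hef0 => ?_⟩
    have heC0 : e ∉ C0 := by
      intro h
      exact heB (hBsup (Finset.mem_erase.mpr ⟨hef0, h⟩))
    have hA'sum : ∑ x ∈ A ∆ C0, φ x = 0 := by
      rw [hsymmsum, hAsum, hC0sum, add_zero]
    have heA' : e ∈ A ∆ C0 :=
      Finset.mem_symmDiff.mpr (Or.inl ⟨Finset.mem_insert_self e _, heC0⟩)
    have hA'E : (↑(A ∆ C0) : Set α) ⊆ M.E := by
      intro x hx
      rcases Finset.mem_symmDiff.mp (Finset.mem_coe.mp hx) with h | h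
      · exact hAE (Finset.mem_coe.mpr h.1)
      · exact hC0E' (Finset.mem_coe.mpr h.1)
    have h2 : r - w + 1 ≤ (A ∆ C0).card := key2 _ hA'E ⟨e, heA'⟩ hA'sum
    have h3 := hcardsymm A C0
    have h4 : A ∩ C0 = Fn e ∩ C0 := by
      rw [hAdef, Finset.insert_inter_of_notMem heC0]
    have hσsd : σ e = Fn e \ C0 := by
      simp only [hσdef, hWdef]
      rw [← Finset.inter_sdiff_assoc, Finset.inter_eq_left.mpr (hFsub e he)]
    have h6 : (Fn e ∩ C0).card + (σ e).card = (Fn e).card := by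
      rw [hσsd]; exact Finset.card_inter_add_card_sdiff (Fn e) C0
    rw [h4] at h3
    omega
  -- injectivity of σ on X
  have hinj0 : ∀ e1 ∈ X, ∀ e2 ∈ X, e1 ≠ e2 → e1 ≠ f0 → σ e1 = σ e2 → False := by
    intro e1 he1 e2 he2 hne hnf0 hσeq
    set G : Finset α := Fn e1 ∆ Fn e2 with hGdef
    have hGB : G ⊆ B := by
      intro x hx
      rcases Finset.mem_symmDiff.mp hx with h | h
      · exact hFsub e1 he1 h.1
      · exact hFsub e2 he2 h.1
    have hGC0 : G ⊆ C0.erase f0 := by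
      intro x hx
      have hxB : x ∈ B := hGB hx
      have hxW : x ∉ W := by
        intro hxW
        have hmem : x ∈ σ e1 ∆ σ e2 := by
          simp only [hσdef]
          rcases Finset.mem_symmDiff.mp hx with h | h
          · exact Finset.mem_symmDiff.mpr (Or.inl ⟨Finset.mem_inter.mpr ⟨h.1, hxW⟩,
              fun hc => h.2 (Finset.mem_inter.mp hc).1⟩)
          · exact Finset.mem_symmDiff.mpr (Or.inr ⟨Finset.mem_inter.mpr ⟨h.1, hxW⟩,
              fun hc => h.2 (Finset.mem_inter.mp hc).1⟩)
        rw [hσeq, symmDiff_self] at hmem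
        exact absurd hmem (Finset.notMem_empty x)
      have hxC0 : x ∈ C0 := by
        by_contra hxc
        exact hxW (Finset.mem_sdiff.mpr ⟨hxB, hxc⟩)
      exact Finset.mem_erase.mpr ⟨fun h => hf0B (h ▸ hxB), hxC0⟩
    have he1B : e1 ∉ B := (hXmem e1 he1).2
    have he2B : e2 ∉ B := (hXmem e2 he2).2
    have he1G : e1 ∉ G := fun h => he1B (hGB h)
    have he2G : e2 ∉ G := fun h => he2B (hGB h)
    set A : Finset α := insert e1 (insert e2 G) with hAdef
    have he1ins : e1 ∉ insert e2 G := by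
      rw [Finset.mem_insert]
      rintro (h | h)
      · exact hne h
      · exact he1G h
    have hAsum : ∑ x ∈ A, φ x = 0 := by
      rw [hAdef, Finset.sum_insert he1ins, Finset.sum_insert he2G, hGdef, hsymmsum,
        hFeq e1 he1, hFeq e2 he2]
      have habel : ∀ a b : Fin n → ZMod 2, a + (b + (a + b)) = 0 := by
        intro a b
        calc a + (b + (a + b)) = (a + a) + (b + b) := by abel
          _ = 0 := by rw [h5, h5, add_zero]
      exact habel _ _
    have hAcard : A.card = 2 + G.card := by
      rw [hAdef, Finset.card_insert_of_notMem he1ins, Finset.card_insert_of_notMem he2G]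
      omega
    have hAE : (↑A : Set α) ⊆ M.E := by
      intro x hx
      rw [Finset.mem_coe, hAdef, Finset.mem_insert, Finset.mem_insert] at hx
      rcases hx with h | h | h
      · rw [h]; exact (hXmem e1 he1).1
      · rw [h]; exact (hXmem e2 he2).1
      · exact hBE (Finset.mem_coe.mpr (hGB h))
    have h1 : r - w + 1 ≤ A.card :=
      key2 A hAE ⟨e1, Finset.mem_insert_self e1 _⟩ hAsum
    have hA'sum : ∑ x ∈ A ∆ C0, φ x = 0 := by
      rw [hsymmsum, hAsum, hC0sum, add_zero]
    have he1C0 : e1 ∉ C0 := by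
      intro h
      exact he1B (hBsup (Finset.mem_erase.mpr ⟨hnf0, h⟩))
    have he1A' : e1 ∈ A ∆ C0 :=
      Finset.mem_symmDiff.mpr (Or.inl ⟨Finset.mem_insert_self e1 _, he1C0⟩)
    have hA'E : (↑(A ∆ C0) : Set α) ⊆ M.E := by
      intro x hx
      rcases Finset.mem_symmDiff.mp (Finset.mem_coe.mp hx) with h | h
      · exact hAE (Finset.mem_coe.mpr h.1)
      · exact hC0E' (Finset.mem_coe.mpr h.1)
    have h2 : r - w + 1 ≤ (A ∆ C0).card := key2 _ hA'E ⟨e1, he1A'⟩ hA'sum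
    have h3 := hcardsymm A C0
    have hGAC0 : G ⊆ A ∩ C0 := by
      intro x hx
      refine Finset.mem_inter.mpr ⟨?_, Finset.mem_of_mem_erase (hGC0 hx)⟩
      rw [hAdef, Finset.mem_insert, Finset.mem_insert]
      exact Or.inr (Or.inr hx)
    have h7 : G.card ≤ (A ∩ C0).card := Finset.card_le_card hGAC0
    omega
  have hinj : ∀ e1 ∈ X, ∀ e2 ∈ X, σ e1 = σ e2 → e1 = e2 := by
    intro e1 he1 e2 he2 heq
    by_contra hne
    by_cases h : e1 = f0
    · have h2f : e2 ≠ f0 := fun h2 => hne (h.trans h2.symm)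
      exact hinj0 e2 he2 e1 he1 (Ne.symm hne) h2f heq.symm
    · exact hinj0 e1 he1 e2 he2 hne h heq
  -- τ : complement of σ in W
  set τ : α → Finset α := fun e => W \ σ e with hτdef
  have hτcard : ∀ e, (τ e).card + (σ e).card = w := by
    intro e
    simp only [hτdef]
    have := Finset.card_sdiff_add_card_eq_card (hσW e)
    omega
  have hτinj : ∀ e1 ∈ X, ∀ e2 ∈ X, τ e1 = τ e2 → e1 = e2 := by
    intro e1 he1 e2 he2 heq
    apply hinj e1 he1 e2 he2
    have h1 : σ e1 = W \ τ e1 := (Finset.sdiff_sdiff_eq_self (hσW e1)).symm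
    have h2 : σ e2 = W \ τ e2 := (Finset.sdiff_sdiff_eq_self (hσW e2)).symm
    rw [h1, h2, heq]
  -- the target finset T
  set T : Finset (Finset α) := W.powerset.filter (fun S => 2 * S.card + r ≤ 3 * w + 1) with hTdef
  have hmap : ∀ e ∈ X.erase f0, τ e ∈ T := by
    intro e he
    have heX : e ∈ X := Finset.mem_of_mem_erase he
    have hef0 : e ≠ f0 := Finset.ne_of_mem_erase he
    obtain ⟨hk1, hk2⟩ := hkeyA e heX
    have hk2' := hk2 hef0
    have hτc := hτcard e
    rw [hTdef, Finset.mem_filter, Finset.mem_powerset]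
    exact ⟨Finset.sdiff_subset, by omega⟩
  have hcount : (X.erase f0).card ≤ T.card := by
    apply Finset.card_le_card_of_injOn τ hmap
    intro e1 he1 e2 he2 heq
    exact hτinj e1 (Finset.mem_of_mem_erase (Finset.mem_coe.mp he1)) e2
      (Finset.mem_of_mem_erase (Finset.mem_coe.mp he2)) heq
  -- counting T
  set p : ℕ → Prop := fun i => 2 * i + r ≤ 3 * w + 1 with hpdef
  have hTcard : T.card ≤ ∑ i ∈ (Finset.range (w + 1)).filter p, w.choose i := by
    have hTsub : T ⊆ ((Finset.range (w + 1)).filter p).biUnion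
        (fun i => Finset.powersetCard i W) := by
      intro S hS
      rw [hTdef, Finset.mem_filter, Finset.mem_powerset] at hS
      obtain ⟨hSW, hcond⟩ := hS
      have hSc : S.card ≤ w := by
        have := Finset.card_le_card hSW
        omega
      rw [Finset.mem_biUnion]
      exact ⟨S.card, Finset.mem_filter.mpr ⟨Finset.mem_range.mpr (by omega), hcond⟩,
        Finset.mem_powersetCard.mpr ⟨hSW, rfl⟩⟩
    calc T.card ≤ (((Finset.range (w + 1)).filter p).biUnion
        (fun i => Finset.powersetCard i W)).card := Finset.card_le_card hTsub
      _ ≤ ∑ i ∈ (Finset.range (w + 1)).filter p, (Finset.powersetCard i W).card :=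
        Finset.card_biUnion_le
      _ = ∑ i ∈ (Finset.range (w + 1)).filter p, w.choose i := by
        apply Finset.sum_congr rfl
        intro i _
        rw [Finset.card_powersetCard, hWcard]
  -- identify the filtered sum with the Icc sum
  have hicc : ∑ i ∈ Finset.Icc (0 : ℤ) s, (w.choose i.toNat : ℤ)
      = ∑ i ∈ (Finset.range (w + 1)).filter p, (w.choose i : ℤ) := by
    apply Finset.sum_nbij' (fun j : ℤ => j.toNat) (fun i : ℕ => (i : ℤ))
    · intro a ha
      rw [Finset.mem_Icc] at ha
      rw [Finset.mem_filter, Finset.mem_range, hpdef]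
      constructor
      · omega
      · omega
    · intro a ha
      rw [Finset.mem_filter, Finset.mem_range, hpdef] at ha
      rw [Finset.mem_Icc]
      omega
    · intro a ha
      rw [Finset.mem_Icc] at ha
      omega
    · intro a _
      omega
    · intro a ha
      rfl
  -- final assembly
  have hEcard : M.E.ncard = EF.card := by rw [← hEFcoe, Set.ncard_coe_finset]
  have hXB : X.card + B.card = EF.card := Finset.card_sdiff_add_card_eq_card hBEF
  have hXpos : 0 < X.card := Finset.card_pos.mpr ⟨f0, hf0X⟩
  have hXer : (X.erase f0).card = X.card - 1 := Finset.card_erase_of_mem hf0X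
  rw [hicc]
  have hcast : ∑ i ∈ (Finset.range (w + 1)).filter p, (w.choose i : ℤ)
      = ((∑ i ∈ (Finset.range (w + 1)).filter p, w.choose i : ℕ) : ℤ) := by
    push_cast
    rfl
  rw [hcast]
  omega
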